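/- Assume every arm's reward satisfies $\mathbb{E}[|X_n(1)|^p] \le u$ with $u > 0$, $p \in (1,2]$. Let $a = 4^{p/(1-p)}u^{1/(1-p)}$, choose $\delta \in (0, \Delta_2/2)$ and $w > 1/(a\delta^{p/(p-1)})$. Under the DSEE policy with exploration sequence including $t$ whenever $|\mathcal{A}(t-1)| < N\lceil w\log t\rceil$, and exploitation choosing the arm with largest truncated sample mean $\widehat{\theta}_n(\tau_n(t), \epsilon_n(t))$ with $\epsilon_n(t) = \exp(-a\delta^{p/(p-1)}\tau_n(t))$, the regret satisfies for all $T$: $R_T^{\pi^*}(\mathcal{F}) \le \sum_{n=2}^N \lceil w\log T\rceil \Delta_n + 2N\Delta_N(1 + \frac{1}{a\delta^{p/(p-1)}w - 1})$. -/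

import Mathlib

open MeasureTheory Real

lemma dsee_tail_sum (c : ℝ) (hc : 1 < c) (T : ℕ) :
    ∑ t ∈ Finset.Icc 1 T, ((t : ℝ)) ^ (-c) ≤ 1 + 1 / (c - 1) := by
  have hc1 : (0:ℝ) < c - 1 := by linarith
  rcases Nat.eq_zero_or_pos T with hT | hT
  · subst hT; simp; positivity
  have hT' : Nat.succ 0 ≤ T := hT
  have hanti : AntitoneOn (fun x : ℝ => x ^ (-c)) (Set.Icc ((Nat.succ 0 : ℕ) : ℝ) T) := by
    intro x hx y hy hxy
    refine Real.rpow_le_rpow_of_nonpos (lt_of_lt_of_le zero_lt_one ?_) hxy (by linarith)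
    simpa using hx.1
  have hint := AntitoneOn.sum_le_integral_Ico (f := fun x : ℝ => x ^ (-c)) hT' hanti
  have hval : ∫ x in ((Nat.succ 0 : ℕ) : ℝ)..(T : ℕ), (x : ℝ) ^ (-c)
      = ((T : ℝ) ^ (-c + 1) - 1 ^ (-c + 1)) / (-c + 1) := by
    rw [integral_rpow]
    · norm_num
    · right
      refine ⟨by intro h; linarith, ?_⟩
      rw [Set.uIcc_of_le (by exact_mod_cast hT')]
      intro h
      simp only [Set.mem_Icc] at h
      have := h.1
      norm_num at this
  have hTpow : (0:ℝ) ≤ (T : ℝ) ^ (-c + 1) := Real.rpow_nonneg (by positivity) _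
  have hIle : ∫ x in ((Nat.succ 0 : ℕ) : ℝ)..(T : ℕ), (x : ℝ) ^ (-c) ≤ 1 / (c - 1) := by
    rw [hval, Real.one_rpow]
    have heq : ((T : ℝ) ^ (-c + 1) - 1) / (-c + 1) = (1 - (T : ℝ) ^ (-c + 1)) / (c - 1) := by
      rw [div_eq_div_iff (by linarith) (by linarith)]; ring
    rw [heq]
    gcongr
    linarith
  have hsplit : Finset.Icc 1 T = insert 1 (Finset.Icc 2 T) := by
    ext x; simp only [Finset.mem_Icc, Finset.mem_insert]; omega
  rw [hsplit, Finset.sum_insert (by simp)]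
  have hsum2 : ∑ t ∈ Finset.Icc 2 T, ((t : ℝ)) ^ (-c)
      = ∑ i ∈ Finset.Ico (Nat.succ 0) T, (((i + 1 : ℕ) : ℝ)) ^ (-c) := by
    rw [← Finset.Ico_add_one_right_eq_Icc, Finset.sum_Ico_eq_sum_range, Finset.sum_Ico_eq_sum_range]
    have : T + 1 - 2 = T - Nat.succ 0 := by omega
    rw [this]
    refine Finset.sum_congr rfl fun i _ => ?_
    congr 2
    omega
  have : ∑ t ∈ Finset.Icc 2 T, ((t : ℝ)) ^ (-c) ≤ 1 / (c - 1) := by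
    rw [hsum2]; exact le_trans hint hIle
  have h1 : ((1:ℕ):ℝ) ^ (-c) = 1 := by norm_num
  rw [h1]
  linarith

lemma dsee_resid_count (N : ℕ) (A : Set ℕ) [DecidablePred (· ∈ A)] (cnt : ℕ → ℕ)
    (hcnt : ∀ t, cnt t = ((Finset.Icc 1 t).filter (· ∈ A)).card) (n : ℕ) :
    ∀ t, ((Finset.Icc 1 t).filter (fun s => s ∈ A ∧ (cnt s - 1) % N = n)).card
      = ((Finset.range (cnt t)).filter (fun k => k % N = n)).card := by
  have hstep : ∀ t, Finset.Icc 1 (t + 1) = insert (t + 1) (Finset.Icc 1 t) := by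
    intro t; ext x; simp only [Finset.mem_Icc, Finset.mem_insert]; omega
  have hsucc : ∀ t, cnt (t + 1) = if t + 1 ∈ A then cnt t + 1 else cnt t := by
    intro t
    rw [hcnt, hcnt, hstep, Finset.filter_insert]
    split
    · rw [Finset.card_insert_of_notMem (by simp)]
    · rfl
  intro t
  induction t with
  | zero => simp [hcnt]
  | succ t ih =>
    rw [hstep, Finset.filter_insert]
    by_cases hmem : t + 1 ∈ A
    · have hc : cnt (t + 1) = cnt t + 1 := by rw [hsucc]; simp [hmem]
      rw [hc, Finset.range_add_one, Finset.filter_insert]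
      have hres : (cnt (t + 1) - 1) % N = cnt t % N := by rw [hc]; simp
      by_cases hr : cnt t % N = n
      · rw [if_pos ⟨hmem, by simpa using hr⟩, if_pos hr,
          Finset.card_insert_of_notMem (by simp), Finset.card_insert_of_notMem (by simp), ih]
      · rw [if_neg (fun h => hr (by simpa using h.2)), if_neg hr, ih]
    · have hc : cnt (t + 1) = cnt t := by rw [hsucc]; simp [hmem]
      rw [if_neg (fun h => hmem h.1), hc, ih]

lemma dsee_resid_lower (N n K M : ℕ) (hn : n < N) (hM : N * K ≤ M) :
    K ≤ ((Finset.range M).filter (fun k => k % N = n)).card := by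
  have := Finset.card_le_card_of_injOn (f := fun q => q * N + n)
    (s := Finset.range K) (t := (Finset.range M).filter (fun k => k % N = n))
    (fun q hq => by
      simp only [Finset.mem_coe, Finset.mem_range] at hq
      simp only [Finset.mem_coe, Finset.mem_filter, Finset.mem_range]
      constructor
      · calc q * N + n < q * N + N := by omega
          _ = (q + 1) * N := by ring
          _ ≤ K * N := Nat.mul_le_mul_right _ (by omega)
          _ = N * K := Nat.mul_comm _ _
          _ ≤ M := hM
      · rw [Nat.add_comm, Nat.add_mul_mod_self_right, Nat.mod_eq_of_lt hn])
    (fun q1 _ q2 _ h => by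
      simp only at h
      exact Nat.eq_of_mul_eq_mul_right (by omega) (Nat.add_right_cancel h))
  simpa using this

lemma dsee_resid_upper (N n K M : ℕ) (hN : 0 < N) (hM : M ≤ N * K) :
    ((Finset.range M).filter (fun k => k % N = n)).card ≤ K := by
  have := Finset.card_le_card_of_injOn (f := fun k => k / N)
    (s := (Finset.range M).filter (fun k => k % N = n)) (t := Finset.range K)
    (fun k hk => by
      simp only [Finset.mem_coe, Finset.mem_filter, Finset.mem_range] at hk
      simp only [Finset.mem_coe, Finset.mem_range]
      have : k < N * K := lt_of_lt_of_le hk.1 hM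
      exact Nat.div_lt_of_lt_mul this)
    (fun k1 h1 k2 h2 h => by
      simp only [Finset.coe_filter, Finset.mem_range, Set.mem_setOf_eq] at h1 h2
      have h' : k1 / N = k2 / N := h
      have e1 := Nat.div_add_mod k1 N
      have e2 := Nat.div_add_mod k2 N
      rw [← e1, ← e2, h', h1.2, h2.2])
  simpa using this

lemma dsee_cnt_succ (A : Set ℕ) [DecidablePred (· ∈ A)] (cnt : ℕ → ℕ)
    (hcnt : ∀ t, cnt t = ((Finset.Icc 1 t).filter (· ∈ A)).card) :
    ∀ t, cnt (t + 1) = if t + 1 ∈ A then cnt t + 1 else cnt t := by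
  intro t
  have hstep : Finset.Icc 1 (t + 1) = insert (t + 1) (Finset.Icc 1 t) := by
    ext x; simp only [Finset.mem_Icc, Finset.mem_insert]; omega
  rw [hcnt, hcnt, hstep, Finset.filter_insert]
  split
  · rw [Finset.card_insert_of_notMem (by simp)]
  · rfl


/-- DSEE logarithmic regret for heavy-tailed rewards via truncated sample means
(Theorem 4): with `E[|Xₙ|^p] ≤ u`, `p ∈ (1,2]`, `a = 4^(p/(1-p)) u^(1/(1-p))`,
`δ ∈ (0, Δ₂/2)`, `w > 1/(a δ^(p/(p-1)))`, exploration sequence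
`t ∈ A ↔ |A(t-1)| < N⌈w log t⌉` played round-robin, and exploitation playing the arm
with largest truncated sample mean satisfying the concentration bound
`Pr(|θ̂ₙ - θₙ| > δ) ≤ 2 exp(-a δ^(p/(p-1)) τₙ(t))`, the regret satisfies
`R_T ≤ ∑_{n=2}^N ⌈w log T⌉ Δₙ + 2NΔ_N(1 + 1/(a δ^(p/(p-1)) w - 1))` for all `T`. -/
theorem dsee_regret_heavy_tailed_truncated {Ω : Type*} [MeasurableSpace Ω]
    (ℙ : Measure Ω) [IsProbabilityMeasure ℙ]
    (N : ℕ) (hN : 2 ≤ N) (θ : Fin N → ℝ)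
    (σ : Equiv.Perm (Fin N)) (hσ : ∀ i j : Fin N, i ≤ j → θ (σ j) ≤ θ (σ i))
    (Δ : Fin N → ℝ) (hΔ : ∀ n, Δ n = θ (σ ⟨0, by omega⟩) - θ (σ n))
    (u p : ℝ) (hu : 0 < u) (hp1 : 1 < p) (hp2 : p ≤ 2)
    (a : ℝ) (ha : a = 4 ^ (p / (1 - p)) * u ^ ((1 : ℝ) / (1 - p)))
    (δ w : ℝ) (hδ : δ ∈ Set.Ioo 0 (Δ ⟨1, by omega⟩ / 2))
    (hw : 1 / (a * δ ^ (p / (p - 1))) < w)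
    (A : Set ℕ) [DecidablePred (· ∈ A)]
    (cnt : ℕ → ℕ) (hcnt : ∀ t, cnt t = ((Finset.Icc 1 t).filter (· ∈ A)).card)
    (hA : ∀ t, 1 ≤ t → (t ∈ A ↔ cnt (t - 1) < N * ⌈w * Real.log t⌉₊))
    (pol : ℕ → Ω → Fin N) (hpolmeas : ∀ t, Measurable (pol t))
    (hround : ∀ t ∈ A, ∀ ω, pol t ω = ⟨(cnt t - 1) % N, Nat.mod_lt _ (by omega)⟩)
    (τ : Fin N → ℕ → ℕ)
    (hτ : ∀ n t, τ n t = ((Finset.Icc 1 (t - 1)).filter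
      (fun s => s ∈ A ∧ (cnt s - 1) % N = (n : ℕ))).card)
    -- truncated sample means and their concentration bound
    (θhat : Fin N → ℕ → Ω → ℝ)
    (hdev : ∀ n t, 1 ≤ t → t ∉ A →
      ℙ {ω | δ < |θhat n t ω - θ n|} ≤
        ENNReal.ofReal (2 * exp (-(a * δ ^ (p / (p - 1)) * τ n t))))
    (hexploit : ∀ t, 1 ≤ t → t ∉ A → ∀ ω, ∀ n, θhat n t ω ≤ θhat (pol t ω) t ω)
    (R : ℕ → ℝ)
    (hR : ∀ T, R T = T * θ (σ ⟨0, by omega⟩)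
      - ∑ t ∈ Finset.Icc 1 T, ∫ ω, θ (pol t ω) ∂ℙ) :
    ∀ T, R T ≤ (∑ n ∈ Finset.univ.erase (⟨0, by omega⟩ : Fin N),
        (⌈w * Real.log T⌉₊ : ℝ) * Δ n)
      + 2 * N * Δ ⟨N - 1, by omega⟩ * (1 + 1 / (a * δ ^ (p / (p - 1)) * w - 1)) := by
  intro T
  have hN0 : 0 < N := by omega
  set best : Fin N := (⟨0, by omega⟩ : Fin N) with hbestdef
  set c : ℝ := a * δ ^ (p / (p - 1)) * w with hcdef
  set K : ℕ := ⌈w * Real.log T⌉₊ with hKdef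
  have hδ0 : 0 < δ := hδ.1
  have ha' : 0 < a := by
    rw [ha]
    exact mul_pos (Real.rpow_pos_of_pos (by norm_num) _) (Real.rpow_pos_of_pos hu _)
  have hb : 0 < a * δ ^ (p / (p - 1)) := mul_pos ha' (Real.rpow_pos_of_pos hδ0 _)
  have hw0 : 0 < w := lt_trans (by positivity) hw
  have hc1 : 1 < c := by
    rw [hcdef]
    have := (div_lt_iff₀ hb).mp hw
    nlinarith
  -- ordering facts
  have hbestmax : ∀ m : Fin N, θ m ≤ θ (σ best) := by
    intro m
    have := hσ best (σ.symm m) (Fin.le_def.mpr (Nat.zero_le _))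
    simpa using this
  have hminmin : ∀ m : Fin N, θ (σ ⟨N - 1, by omega⟩) ≤ θ m := by
    intro m
    have := hσ (σ.symm m) ⟨N - 1, by omega⟩ (by
      simp only [Fin.le_def]
      have := (σ.symm m).isLt
      omega)
    simpa using this
  set Δmax : ℝ := Δ ⟨N - 1, by omega⟩ with hΔmaxdef
  have hΔmax : ∀ m : Fin N, θ (σ best) - θ m ≤ Δmax := by
    intro m
    rw [hΔmaxdef, hΔ]
    have := hminmin m
    linarith
  have hΔmax0 : 0 ≤ Δmax := by
    have h1 := hΔmax best
    have h2 := hbestmax best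
    linarith
  -- integrability
  have hmeas : ∀ t, Measurable fun ω => θ (pol t ω) :=
    fun t => (measurable_of_finite θ).comp (hpolmeas t)
  have hintg : ∀ t, Integrable (fun ω => θ (pol t ω)) ℙ := by
    intro t
    refine Integrable.mono' (integrable_const (∑ m : Fin N, |θ m|))
      (hmeas t).aestronglyMeasurable ?_
    filter_upwards with ω
    rw [Real.norm_eq_abs]
    exact Finset.single_le_sum (f := fun m => |θ m|) (fun m _ => abs_nonneg _)
      (Finset.mem_univ _)
  have hreg : ∀ t, ∫ ω, (θ (σ best) - θ (pol t ω)) ∂ℙ = θ (σ best) - ∫ ω, θ (pol t ω) ∂ℙ := by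
    intro t
    rw [integral_sub (integrable_const _) (hintg t), integral_const, probReal_univ,
      one_smul]
  -- rewrite regret as a sum of per-round regrets
  have hRT : R T = ∑ t ∈ Finset.Icc 1 T, ∫ ω, (θ (σ best) - θ (pol t ω)) ∂ℙ := by
    rw [hR]
    have hTcard : (T : ℝ) * θ (σ best) = ∑ _t ∈ Finset.Icc 1 T, θ (σ best) := by
      rw [Finset.sum_const, Nat.card_Icc]
      simp [mul_comm]
    rw [hTcard, ← Finset.sum_sub_distrib]
    exact Finset.sum_congr rfl fun t _ => (hreg t).symm
  -- cnt is bounded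
  have hcsucc := dsee_cnt_succ A cnt hcnt
  have hcnt0 : cnt 0 = 0 := by rw [hcnt]; simp
  have hcntle : ∀ t, t ≤ T → cnt t ≤ N * K := by
    intro t
    induction t with
    | zero => intro _; simp [hcnt0]
    | succ t iht =>
      intro hle
      have hKmono : ⌈w * Real.log (t + 1 : ℕ)⌉₊ ≤ K := by
        rw [hKdef]
        refine Nat.ceil_le_ceil ?_
        refine mul_le_mul_of_nonneg_left ?_ hw0.le
        refine Real.log_le_log (by positivity) ?_
        exact_mod_cast hle
      by_cases hmem : t + 1 ∈ A
      · have := (hA (t + 1) (by omega)).mp hmem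
        simp only [Nat.add_sub_cancel] at this
        rw [hcsucc, if_pos hmem]
        calc cnt t + 1 ≤ N * ⌈w * Real.log (t + 1 : ℕ)⌉₊ := this
          _ ≤ N * K := Nat.mul_le_mul_left _ hKmono
      · rw [hcsucc, if_neg hmem]
        exact iht (by omega)
  -- split the sum into exploration and exploitation rounds
  rw [hRT, ← Finset.sum_filter_add_sum_filter_not (Finset.Icc 1 T) (· ∈ A)]
  have hexplore : ∑ t ∈ (Finset.Icc 1 T).filter (· ∈ A), ∫ ω, (θ (σ best) - θ (pol t ω)) ∂ℙ
      ≤ ∑ n ∈ Finset.univ.erase best, (K : ℝ) * Δ n := by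
    set S := (Finset.Icc 1 T).filter (· ∈ A) with hSdef
    set F : ℕ → ℝ := fun r => θ (σ best) - θ ⟨r % N, Nat.mod_lt _ hN0⟩ with hFdef
    have hF0 : ∀ r, 0 ≤ F r := fun r => sub_nonneg.mpr (hbestmax _)
    have hFval : ∀ i : Fin N, F (i : ℕ) = θ (σ best) - θ i := by
      intro i
      have hmk : (⟨(i : ℕ) % N, Nat.mod_lt _ hN0⟩ : Fin N) = i := by
        apply Fin.ext
        simp [Nat.mod_eq_of_lt i.isLt]
      rw [hFdef]
      simp only
      rw [hmk]
    have hpolconst : ∀ t ∈ S, ∫ ω, (θ (σ best) - θ (pol t ω)) ∂ℙ = F ((cnt t - 1) % N) := by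
      intro t ht
      have htA : t ∈ A := (Finset.mem_filter.mp ht).2
      have heq : (fun ω => θ (σ best) - θ (pol t ω))
          = fun _ω => θ (σ best) - θ (⟨(cnt t - 1) % N, Nat.mod_lt _ hN0⟩ : Fin N) := by
        funext ω; rw [hround t htA ω]
      rw [heq, integral_const, probReal_univ, one_smul, hFdef]
      have hmk : (⟨(cnt t - 1) % N % N, Nat.mod_lt _ hN0⟩ : Fin N)
          = (⟨(cnt t - 1) % N, Nat.mod_lt _ hN0⟩ : Fin N) := by
        apply Fin.ext
        simp [Nat.mod_eq_of_lt (Nat.mod_lt (cnt t - 1) hN0)]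
      exact congrArg (fun x => θ (σ best) - θ x) hmk.symm
    have hcard : ∀ n, (S.filter (fun t => (cnt t - 1) % N = n)).card ≤ K := by
      intro n
      rw [hSdef, Finset.filter_filter]
      have h1 := dsee_resid_count N A cnt hcnt n T
      have h2 := dsee_resid_upper N n K (cnt T) hN0 (hcntle T le_rfl)
      calc ((Finset.Icc 1 T).filter (fun s => s ∈ A ∧ (cnt s - 1) % N = n)).card
          = ((Finset.range (cnt T)).filter (fun k => k % N = n)).card := h1
        _ ≤ K := h2
    calc ∑ t ∈ S, ∫ ω, (θ (σ best) - θ (pol t ω)) ∂ℙ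
        = ∑ t ∈ S, F ((cnt t - 1) % N) := Finset.sum_congr rfl hpolconst
      _ = ∑ n ∈ Finset.range N, ∑ t ∈ S.filter (fun t => (cnt t - 1) % N = n),
            F ((cnt t - 1) % N) :=
          (Finset.sum_fiberwise_of_maps_to
            (fun t _ => Finset.mem_range.mpr (Nat.mod_lt _ hN0)) _).symm
      _ = ∑ n ∈ Finset.range N, ((S.filter (fun t => (cnt t - 1) % N = n)).card : ℝ) * F n := by
          refine Finset.sum_congr rfl fun n _ => ?_
          have hinner : ∑ t ∈ S.filter (fun t => (cnt t - 1) % N = n), F ((cnt t - 1) % N)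
              = ∑ _t ∈ S.filter (fun t => (cnt t - 1) % N = n), F n :=
            Finset.sum_congr rfl (fun t ht => by rw [(Finset.mem_filter.mp ht).2])
          rw [hinner, Finset.sum_const, nsmul_eq_mul]
      _ ≤ ∑ n ∈ Finset.range N, (K : ℝ) * F n := by
          refine Finset.sum_le_sum fun n _ => ?_
          exact mul_le_mul_of_nonneg_right (by exact_mod_cast hcard n) (hF0 n)
      _ = (K : ℝ) * ∑ n ∈ Finset.range N, F n := (Finset.mul_sum _ _ _).symm
      _ = ∑ n ∈ Finset.univ.erase best, (K : ℝ) * Δ n := by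
          rw [← Fin.sum_univ_eq_sum_range F N]
          have h3 : ∑ i : Fin N, F (i : ℕ) = ∑ i : Fin N, (θ (σ best) - θ i) :=
            Finset.sum_congr rfl fun i _ => hFval i
          have h4 : ∑ i : Fin N, (θ (σ best) - θ i)
              = ∑ j : Fin N, (θ (σ best) - θ (σ j)) :=
            (Equiv.sum_comp σ fun i => θ (σ best) - θ i).symm
          have h5 : ∑ j : Fin N, (θ (σ best) - θ (σ j)) = ∑ j : Fin N, Δ j :=
            Finset.sum_congr rfl fun j _ => (hΔ j).symm
          have h6 : ∑ j : Fin N, Δ j = ∑ n ∈ Finset.univ.erase best, Δ n := by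
            rw [← Finset.sum_erase_add Finset.univ Δ (Finset.mem_univ best),
              hΔ best, sub_self, add_zero]
          rw [h3, h4, h5, h6, Finset.mul_sum]
  have hexploitbd : ∑ t ∈ (Finset.Icc 1 T).filter (¬ · ∈ A), ∫ ω, (θ (σ best) - θ (pol t ω)) ∂ℙ
      ≤ 2 * N * Δmax * (1 + 1 / (c - 1)) := by
    have hkey : ∀ t ∈ (Finset.Icc 1 T).filter (¬ · ∈ A),
        ∫ ω, (θ (σ best) - θ (pol t ω)) ∂ℙ ≤ 2 * N * Δmax * (t : ℝ) ^ (-c) := by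
      intro t ht
      obtain ⟨htIcc, htA⟩ := Finset.mem_filter.mp ht
      have ht1 : 1 ≤ t := (Finset.mem_Icc.mp htIcc).1
      have ht0 : (0 : ℝ) < t := by exact_mod_cast Nat.lt_of_lt_of_le Nat.zero_lt_one ht1
      have htA' : t ∉ A := htA
      set g : Ω → ℝ := fun ω => θ (σ best) - θ (pol t ω) with hgdef
      have hgmeas : Measurable g := measurable_const.sub (hmeas t)
      set B : Set Ω := {ω | g ω ≠ 0} with hBdef
      have hBmeas : MeasurableSet B := by
        have hBeq : B = g ⁻¹' {0}ᶜ := by ext ω; simp [hBdef]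
        rw [hBeq]
        exact hgmeas (measurableSet_singleton 0).compl
      have hgle : ∀ ω, g ω ≤ B.indicator (fun _ => Δmax) ω := by
        intro ω
        by_cases h : g ω = 0
        · rw [h]
          exact Set.indicator_nonneg (fun _ _ => hΔmax0) ω
        · rw [Set.indicator_of_mem (show ω ∈ B from h)]
          exact hΔmax _
      have hint1 : ∫ ω, g ω ∂ℙ ≤ ∫ ω, B.indicator (fun _ => Δmax) ω ∂ℙ := by
        refine integral_mono ((integrable_const _).sub (hintg t)) ?_ hgle
        exact (integrable_const Δmax).indicator hBmeas
      have hint2 : ∫ ω, B.indicator (fun _ => Δmax) ω ∂ℙ = (ℙ B).toReal * Δmax := by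
        rw [integral_indicator_const _ hBmeas, smul_eq_mul, measureReal_def]
      set D : Fin N → Set Ω := fun n => {ω | δ < |θhat n t ω - θ n|} with hDdef
      have hsub : B ⊆ ⋃ n, D n := by
        intro ω hω
        rw [Set.mem_iUnion]
        by_contra hno
        push_neg at hno
        have hclose : ∀ n : Fin N, |θhat n t ω - θ n| ≤ δ := by
          intro n
          have hno' := hno n
          simp only [hDdef, Set.mem_setOf_eq, not_lt] at hno'
          exact hno'
        apply hω
        have h1 := abs_le.mp (hclose (pol t ω))
        have h2 := abs_le.mp (hclose (σ best))
        have h3 := hexploit t ht1 htA' ω (σ best)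
        have hδ2 : 2 * δ < Δ ⟨1, by omega⟩ := by
          have := hδ.2; linarith
        have hlt : θ (σ ⟨1, by omega⟩) < θ (pol t ω) := by
          rw [hΔ] at hδ2; linarith
        have hzero : σ.symm (pol t ω) = best := by
          by_contra hne
          have h1le : (1 : ℕ) ≤ (σ.symm (pol t ω) : ℕ) := by
            rcases Nat.eq_zero_or_pos (σ.symm (pol t ω) : ℕ) with h0 | h0
            · exact absurd (Fin.ext h0) hne
            · omega
          have hgt := hσ ⟨1, by omega⟩ (σ.symm (pol t ω)) (by simpa [Fin.le_def] using h1le)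
          rw [Equiv.apply_symm_apply] at hgt
          linarith
        have hpolbest : pol t ω = σ best := by
          rw [← hzero, Equiv.apply_symm_apply]
        rw [hgdef]
        simp only
        rw [hpolbest, sub_self]
      have hDbd : ∀ n : Fin N, ℙ (D n) ≤ ENNReal.ofReal (2 * (t : ℝ) ^ (-c)) := by
        intro n
        have hcntge : N * ⌈w * Real.log t⌉₊ ≤ cnt (t - 1) := by
          by_contra hcon
          push_neg at hcon
          exact htA' ((hA t ht1).mpr hcon)
        have hτge : (⌈w * Real.log t⌉₊ : ℕ) ≤ τ n t := by
          rw [hτ, dsee_resid_count N A cnt hcnt _ (t - 1)]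
          exact dsee_resid_lower N n ⌈w * Real.log t⌉₊ (cnt (t - 1)) n.isLt hcntge
        have hlog : w * Real.log t ≤ (τ n t : ℝ) :=
          le_trans (Nat.le_ceil _) (by exact_mod_cast hτge)
        have hmm : c * Real.log t ≤ a * δ ^ (p / (p - 1)) * τ n t := by
          rw [hcdef]
          calc a * δ ^ (p / (p - 1)) * w * Real.log t
              = a * δ ^ (p / (p - 1)) * (w * Real.log t) := by ring
            _ ≤ a * δ ^ (p / (p - 1)) * τ n t := mul_le_mul_of_nonneg_left hlog hb.le
        have hexp : 2 * exp (-(a * δ ^ (p / (p - 1)) * τ n t)) ≤ 2 * (t : ℝ) ^ (-c) := by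
          have hee : exp (-(a * δ ^ (p / (p - 1)) * τ n t)) ≤ exp (-(c * Real.log t)) :=
            Real.exp_le_exp.mpr (by linarith)
          have heq2 : exp (-(c * Real.log t)) = (t : ℝ) ^ (-c) := by
            rw [Real.rpow_def_of_pos ht0]
            congr 1
            ring
          rw [← heq2]
          linarith
        exact le_trans (hdev n t ht1 htA') (ENNReal.ofReal_le_ofReal hexp)
      have hBle : ℙ B ≤ ENNReal.ofReal (N * (2 * (t : ℝ) ^ (-c))) := by
        calc ℙ B ≤ ℙ (⋃ n, D n) := measure_mono hsub
          _ ≤ ∑' n : Fin N, ℙ (D n) := measure_iUnion_le D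
          _ = ∑ n : Fin N, ℙ (D n) := tsum_fintype _
          _ ≤ ∑ _n : Fin N, ENNReal.ofReal (2 * (t : ℝ) ^ (-c)) :=
              Finset.sum_le_sum (fun n _ => hDbd n)
          _ = (N : ENNReal) * ENNReal.ofReal (2 * (t : ℝ) ^ (-c)) := by
              rw [Finset.sum_const, Finset.card_univ, Fintype.card_fin, nsmul_eq_mul]
          _ = ENNReal.ofReal (N * (2 * (t : ℝ) ^ (-c))) := by
              rw [ENNReal.ofReal_mul (by positivity : (0 : ℝ) ≤ (N : ℝ)),
                ENNReal.ofReal_natCast]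
      have hBreal : (ℙ B).toReal ≤ N * (2 * (t : ℝ) ^ (-c)) :=
        ENNReal.toReal_le_of_le_ofReal (by positivity) hBle
      calc ∫ ω, (θ (σ best) - θ (pol t ω)) ∂ℙ = ∫ ω, g ω ∂ℙ := rfl
        _ ≤ (ℙ B).toReal * Δmax := by rw [← hint2]; exact hint1
        _ ≤ (N * (2 * (t : ℝ) ^ (-c))) * Δmax := mul_le_mul_of_nonneg_right hBreal hΔmax0
        _ = 2 * N * Δmax * (t : ℝ) ^ (-c) := by ring
    calc ∑ t ∈ (Finset.Icc 1 T).filter (¬ · ∈ A), ∫ ω, (θ (σ best) - θ (pol t ω)) ∂ℙ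
        ≤ ∑ t ∈ (Finset.Icc 1 T).filter (¬ · ∈ A), 2 * N * Δmax * (t : ℝ) ^ (-c) :=
          Finset.sum_le_sum hkey
      _ ≤ ∑ t ∈ Finset.Icc 1 T, 2 * N * Δmax * (t : ℝ) ^ (-c) :=
          Finset.sum_le_sum_of_subset_of_nonneg (Finset.filter_subset _ _)
            (fun t _ _ => by positivity)
      _ = 2 * N * Δmax * ∑ t ∈ Finset.Icc 1 T, (t : ℝ) ^ (-c) := (Finset.mul_sum _ _ _).symm
      _ ≤ 2 * N * Δmax * (1 + 1 / (c - 1)) := by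
          refine mul_le_mul_of_nonneg_left (dsee_tail_sum c hc1 T) ?_
          positivity
  have : (2 : ℝ) * N * Δmax * (1 + 1 / (a * δ ^ (p / (p - 1)) * w - 1))
      = 2 * N * Δmax * (1 + 1 / (c - 1)) := by rw [hcdef]
  rw [this]
  exact add_le_add hexplore hexploitbd
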